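/- Let F be a submodular function on V with F(∅) = 0 and f its Lovász extension, and for each i ∈ V let h_i : ℝ → ℝ be strictly convex and differentiable with derivative h_i' surjective onto ℝ. Then min_{x ∈ ℝ^V} [ f(x) + Σ_{i∈V} h_i(x_i) ] = max_{y ∈ B(F)} [ − Σ_{i∈V} h_i*(−y_i) ], both optima are attained, the minimizer x* is unique, and for any maximizer y* one has −y*_i = h_i'(x*_i) for all i ∈ V. -/
import Mathlib


open Finset
open Finset

def Submodular {n : ℕ} (F : Finset (Fin n) → ℝ) : Prop :=
  ∀ S T : Finset (Fin n), F (S ∪ T) + F (S ∩ T) ≤ F S + F T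

def basePolytope {n : ℕ} (F : Finset (Fin n) → ℝ) : Set (Fin n → ℝ) :=
  {y | (∀ S : Finset (Fin n), ∑ i ∈ S, y i ≤ F S) ∧ ∑ i, y i = F Finset.univ}

def SortsDesc {n : ℕ} (x : Fin n → ℝ) (σ : Equiv.Perm (Fin n)) : Prop :=
  ∀ j k : Fin n, j ≤ k → x (σ k) ≤ x (σ j)

def lovaszVal {n : ℕ} (F : Finset (Fin n) → ℝ) (x : Fin n → ℝ) (σ : Equiv.Perm (Fin n)) : ℝ :=
  ∑ k : Fin n, x (σ k) *
    (F ((Finset.univ.filter (fun j => j ≤ k)).image ⇑σ)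
      - F ((Finset.univ.filter (fun j => j < k)).image ⇑σ))

def IsLovasz {n : ℕ} (F : Finset (Fin n) → ℝ) (f : (Fin n → ℝ) → ℝ) : Prop :=
  ∀ (x : Fin n → ℝ) (σ : Equiv.Perm (Fin n)), SortsDesc x σ → f x = lovaszVal F x σ

/-- The (real-valued) Fenchel conjugate of a convex function `h : ℝ → ℝ`:
`h*(s) = sup_t (s·t − h(t))` (finite under the hypotheses of the theorem). -/
noncomputable def realConj (h : ℝ → ℝ) (s : ℝ) : ℝ :=
  sSup (Set.range fun t => s * t - h t)

section OneDim
variable {h h' : ℝ → ℝ}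

lemma grad_le (sc : StrictConvexOn ℝ (Set.univ : Set ℝ) h)
    (hd : ∀ t, HasDerivAt h (h' t) t) (u t : ℝ) :
    h u + h' u * (t - u) ≤ h t := by
  rcases lt_trichotomy u t with hlt | rfl | hgt
  · have := (sc.lt_slope_of_hasDerivAt (Set.mem_univ u) (Set.mem_univ t) hlt (hd u)).le
    rw [slope_def_field] at this
    have ht : (0:ℝ) < t - u := by linarith
    have := (le_div_iff₀ ht).mp this
    linarith
  · simp
  · have := (sc.slope_lt_of_hasDerivAt (Set.mem_univ t) (Set.mem_univ u) hgt (hd u)).le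
    rw [slope_def_field] at this
    have ht : (0:ℝ) < u - t := by linarith
    have := (div_le_iff₀ ht).mp this
    linarith

lemma grad_lt (sc : StrictConvexOn ℝ (Set.univ : Set ℝ) h)
    (hd : ∀ t, HasDerivAt h (h' t) t) {u t : ℝ} (hne : u ≠ t) :
    h u + h' u * (t - u) < h t := by
  rcases lt_trichotomy u t with hlt | rfl | hgt
  · have := sc.lt_slope_of_hasDerivAt (Set.mem_univ u) (Set.mem_univ t) hlt (hd u)
    rw [slope_def_field] at this
    have ht : (0:ℝ) < t - u := by linarith
    have := (lt_div_iff₀ ht).mp this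
    linarith
  · exact absurd rfl hne
  · have := sc.slope_lt_of_hasDerivAt (Set.mem_univ t) (Set.mem_univ u) hgt (hd u)
    rw [slope_def_field] at this
    have ht : (0:ℝ) < u - t := by linarith
    have := (div_lt_iff₀ ht).mp this
    linarith

lemma deriv_strictMono (sc : StrictConvexOn ℝ (Set.univ : Set ℝ) h)
    (hd : ∀ t, HasDerivAt h (h' t) t) : StrictMono h' := by
  intro u v huv
  have h1 := grad_lt sc hd huv.ne
  have h2 := grad_lt sc hd huv.ne'
  nlinarith

lemma realConj_eq (sc : StrictConvexOn ℝ (Set.univ : Set ℝ) h)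
    (hd : ∀ t, HasDerivAt h (h' t) t) (s t₀ : ℝ) (ht₀ : h' t₀ = s) :
    realConj h s = s * t₀ - h t₀ := by
  apply IsGreatest.csSup_eq
  constructor
  · exact ⟨t₀, rfl⟩
  · rintro v ⟨t, rfl⟩
    have := grad_le sc hd t₀ t
    rw [ht₀] at this
    simp only
    nlinarith

lemma le_realConj (sc : StrictConvexOn ℝ (Set.univ : Set ℝ) h)
    (hd : ∀ t, HasDerivAt h (h' t) t) (s t₀ t : ℝ) (ht₀ : h' t₀ = s) :
    s * t - h t ≤ realConj h s := by
  rw [realConj_eq sc hd s t₀ ht₀]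
  have := grad_le sc hd t₀ t
  rw [ht₀] at this
  nlinarith

lemma eq_realConj (sc : StrictConvexOn ℝ (Set.univ : Set ℝ) h)
    (hd : ∀ t, HasDerivAt h (h' t) t) {s t₀ t : ℝ} (ht₀ : h' t₀ = s)
    (heq : s * t - h t = realConj h s) : t = t₀ := by
  by_contra hne
  have hlt := grad_lt sc hd (show t₀ ≠ t from fun e => hne e.symm)
  rw [realConj_eq sc hd s t₀ ht₀] at heq
  rw [ht₀] at hlt
  nlinarith

end OneDim

section Comb
variable {n : ℕ}

/-- prefix set of the first `m` elements in the order `σ`. -/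
def pref (σ : Equiv.Perm (Fin n)) (m : ℕ) : Finset (Fin n) :=
  (Finset.univ.filter (fun j : Fin n => (j : ℕ) < m)).image σ

lemma pref_zero (σ : Equiv.Perm (Fin n)) : pref σ 0 = ∅ := by
  simp [pref]

lemma pref_ge (σ : Equiv.Perm (Fin n)) {m : ℕ} (hm : n ≤ m) : pref σ m = Finset.univ := by
  have : (Finset.univ.filter (fun j : Fin n => (j : ℕ) < m)) = Finset.univ := by
    apply Finset.filter_true_of_mem
    intro j _; exact lt_of_lt_of_le j.isLt hm
  rw [pref, this]
  ext i
  simp only [Finset.mem_image, Finset.mem_univ, iff_true, true_and]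
  exact ⟨σ.symm i, σ.apply_symm_apply i⟩

lemma pref_succ (σ : Equiv.Perm (Fin n)) {m : ℕ} (hm : m < n) :
    pref σ (m + 1) = insert (σ ⟨m, hm⟩) (pref σ m) := by
  rw [pref, pref]
  have : (Finset.univ.filter (fun j : Fin n => (j : ℕ) < m + 1))
      = insert (⟨m, hm⟩ : Fin n) (Finset.univ.filter (fun j : Fin n => (j : ℕ) < m)) := by
    ext j
    simp only [Finset.mem_filter, Finset.mem_insert, Finset.mem_univ, true_and]
    constructor
    · intro hj
      rcases Nat.lt_succ_iff_lt_or_eq.mp hj with hj | hj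
      · exact Or.inr hj
      · exact Or.inl (Fin.ext hj)
    · rintro (rfl | hj)
      · exact Nat.lt_succ_self m
      · exact Nat.lt_succ_of_lt hj
  rw [this, Finset.image_insert]

lemma notMem_pref (σ : Equiv.Perm (Fin n)) {m : ℕ} (hm : m < n) :
    σ ⟨m, hm⟩ ∉ pref σ m := by
  rw [pref]
  intro hmem
  rcases Finset.mem_image.mp hmem with ⟨j, hj, hje⟩
  have : j = ⟨m, hm⟩ := σ.injective hje
  subst this
  simp at hj

/-- The greedy vector associated to a permutation. -/
noncomputable def greedy (F : Finset (Fin n) → ℝ) (σ : Equiv.Perm (Fin n)) : Fin n → ℝ :=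
  fun i => F (pref σ ((σ.symm i : ℕ) + 1)) - F (pref σ (σ.symm i))

lemma greedy_apply (F : Finset (Fin n) → ℝ) (σ : Equiv.Perm (Fin n)) (k : Fin n) :
    greedy F σ (σ k) = F (pref σ ((k : ℕ) + 1)) - F (pref σ (k : ℕ)) := by
  simp [greedy]

lemma greedy_sum_eq (F : Finset (Fin n) → ℝ) (hF0 : F ∅ = 0) (σ : Equiv.Perm (Fin n)) :
    ∑ i, greedy F σ i = F Finset.univ := by
  have h1 : ∑ i, greedy F σ i = ∑ k : Fin n, greedy F σ (σ k) :=
    (Equiv.sum_comp σ (greedy F σ)).symm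
  have h2 : ∑ k : Fin n, greedy F σ (σ k)
      = ∑ k ∈ Finset.range n, (F (pref σ (k + 1)) - F (pref σ k)) := by
    rw [← Fin.sum_univ_eq_sum_range]
    exact Finset.sum_congr rfl fun k _ => greedy_apply F σ k
  rw [h1, h2, Finset.sum_range_sub (fun m => F (pref σ m)), pref_zero, pref_ge σ le_rfl, hF0,
    sub_zero]

lemma greedy_subset_sum_le (F : Finset (Fin n) → ℝ) (hF0 : F ∅ = 0) (hF : Submodular F)
    (σ : Equiv.Perm (Fin n)) :
    ∀ m : ℕ, ∀ A : Finset (Fin n), A ⊆ pref σ m → ∑ i ∈ A, greedy F σ i ≤ F A := by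
  intro m
  induction m with
  | zero =>
    intro A hA
    rw [pref_zero] at hA
    rw [Finset.subset_empty.mp hA]
    simp [hF0]
  | succ m IH =>
    intro A hA
    by_cases hm : m < n
    · rw [pref_succ σ hm] at hA
      set e := σ ⟨m, hm⟩ with he
      by_cases hem : e ∈ A
      · have hsub : A.erase e ⊆ pref σ m := by
          intro x hx
          rcases Finset.mem_erase.mp hx with ⟨hne, hxA⟩
          rcases Finset.mem_insert.mp (hA hxA) with h | h
          · exact absurd h hne
          · exact h
        have IH' := IH (A.erase e) hsub
        have hunion : A ∪ pref σ m = pref σ (m + 1) := by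
          rw [pref_succ σ hm, ← he]
          apply Finset.Subset.antisymm
          · apply Finset.union_subset
            · intro x hx
              exact hA hx
            · intro x hx
              exact Finset.mem_insert_of_mem hx
          · intro x hx
            rcases Finset.mem_insert.mp hx with rfl | h
            · exact Finset.mem_union_left _ hem
            · exact Finset.mem_union_right _ h
        have hinter : A ∩ pref σ m = A.erase e := by
          ext x
          simp only [Finset.mem_inter, Finset.mem_erase]
          constructor
          · rintro ⟨hxA, hxp⟩
            refine ⟨?_, hxA⟩
            rintro rfl
            exact notMem_pref σ hm hxp
          · rintro ⟨hne, hxA⟩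
            refine ⟨hxA, ?_⟩
            rcases Finset.mem_insert.mp (hA hxA) with h | h
            · exact absurd h hne
            · exact h
        have hsm := hF A (pref σ m)
        rw [hunion, hinter] at hsm
        have hge : greedy F σ e = F (pref σ (m + 1)) - F (pref σ m) := by
          rw [he, greedy_apply]
        have hsum : ∑ i ∈ A.erase e, greedy F σ i + greedy F σ e = ∑ i ∈ A, greedy F σ i :=
          Finset.sum_erase_add A _ hem
        linarith
      · exact IH A (fun x hx => (Finset.mem_insert.mp (hA hx)).resolve_left
          (fun hxe => hem (hxe ▸ hx)))
    · push_neg at hm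
      exact IH A (by rw [pref_ge σ hm]; exact Finset.subset_univ A)

lemma greedy_mem (F : Finset (Fin n) → ℝ) (hF0 : F ∅ = 0) (hF : Submodular F)
    (σ : Equiv.Perm (Fin n)) : greedy F σ ∈ basePolytope F := by
  refine ⟨fun S => ?_, greedy_sum_eq F hF0 σ⟩
  exact greedy_subset_sum_le F hF0 hF σ n S (by rw [pref_ge σ le_rfl]; exact Finset.subset_univ S)

lemma lovaszVal_eq_ip (F : Finset (Fin n) → ℝ) (x : Fin n → ℝ) (σ : Equiv.Perm (Fin n)) :
    lovaszVal F x σ = ∑ i, x i * greedy F σ i := by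
  have h1 : ∑ i, x i * greedy F σ i = ∑ k : Fin n, x (σ k) * greedy F σ (σ k) :=
    (Equiv.sum_comp σ (fun i => x i * greedy F σ i)).symm
  rw [h1, lovaszVal]
  apply Finset.sum_congr rfl
  intro k _
  have e1 : (Finset.univ.filter (fun j => j ≤ k)).image ⇑σ = pref σ ((k : ℕ) + 1) := by
    rw [pref]
    congr 1
    apply Finset.filter_congr
    intro j _
    rw [Nat.lt_succ_iff]
    exact ⟨fun hh => hh, fun hh => hh⟩
  have e2 : (Finset.univ.filter (fun j => j < k)).image ⇑σ = pref σ (k : ℕ) := by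
    rw [pref]
    congr 1
  rw [greedy_apply, e1, e2]

lemma abel_sum (a c : ℕ → ℝ) (n : ℕ) :
    ∑ k ∈ Finset.range n, a k * (c (k + 1) - c k)
      = ∑ k ∈ Finset.range n, (a k - a (k + 1)) * c (k + 1) + a n * c n - a 0 * c 0 := by
  induction n with
  | zero => simp
  | succ m IH =>
    rw [Finset.sum_range_succ, Finset.sum_range_succ, IH]
    ring

lemma exists_sortsDesc (x : Fin n → ℝ) : ∃ σ : Equiv.Perm (Fin n), SortsDesc x σ := by
  refine ⟨Tuple.sort (fun i => -x i), ?_⟩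
  intro j k hjk
  have := Tuple.monotone_sort (fun i => -x i) hjk
  simpa using this

lemma ip_le_lovaszVal (F : Finset (Fin n) → ℝ) (hF0 : F ∅ = 0) (x y : Fin n → ℝ)
    (hy : y ∈ basePolytope F) (σ : Equiv.Perm (Fin n)) (hs : SortsDesc x σ) :
    ∑ i, x i * y i ≤ lovaszVal F x σ := by
  obtain ⟨hy1, hy2⟩ := hy
  rcases Nat.eq_zero_or_pos n with rfl | hn
  · simp [lovaszVal]
  obtain ⟨m, rfl⟩ : ∃ m, n = m + 1 := ⟨n - 1, by omega⟩
  set a : ℕ → ℝ := fun j => x (σ ⟨min j m, by omega⟩) with ha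
  set c : ℕ → ℝ := fun j => F (pref σ j) - ∑ i ∈ pref σ j, y i with hc
  have hak : ∀ k : Fin (m + 1), a (k : ℕ) = x (σ k) := by
    intro k
    have : min (k : ℕ) m = (k : ℕ) := min_eq_left (Nat.lt_succ_iff.mp k.isLt)
    simp only [ha]
    congr 1
    exact congrArg σ (Fin.ext this)
  have hyk : ∀ k : ℕ, ∀ hk : k < m + 1,
      y (σ ⟨k, hk⟩) = (∑ i ∈ pref σ (k + 1), y i) - ∑ i ∈ pref σ k, y i := by
    intro k hk
    rw [pref_succ σ hk, Finset.sum_insert (notMem_pref σ hk)]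
    ring
  have hlov : lovaszVal F x σ = ∑ k ∈ Finset.range (m + 1),
      a k * (F (pref σ (k + 1)) - F (pref σ k)) := by
    rw [lovaszVal_eq_ip, ← Equiv.sum_comp σ (fun i => x i * greedy F σ i),
      ← Fin.sum_univ_eq_sum_range (fun k => a k * (F (pref σ (k + 1)) - F (pref σ k)))]
    apply Finset.sum_congr rfl
    intro k _
    rw [greedy_apply, hak]
  have hip : ∑ i, x i * y i = ∑ k ∈ Finset.range (m + 1),
      a k * ((∑ i ∈ pref σ (k + 1), y i) - ∑ i ∈ pref σ k, y i) := by
    rw [← Equiv.sum_comp σ (fun i => x i * y i),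
      ← Fin.sum_univ_eq_sum_range
        (fun k => a k * ((∑ i ∈ pref σ (k + 1), y i) - ∑ i ∈ pref σ k, y i))]
    apply Finset.sum_congr rfl
    intro k _
    rw [hak, ← hyk k k.isLt]
  have hdiff : lovaszVal F x σ - ∑ i, x i * y i
      = ∑ k ∈ Finset.range (m + 1), a k * (c (k + 1) - c k) := by
    rw [hlov, hip, ← Finset.sum_sub_distrib]
    apply Finset.sum_congr rfl
    intro k _
    simp only [hc]
    ring
  have habel := abel_sum a c (m + 1)
  have hc0 : c 0 = 0 := by simp [hc, pref_zero, hF0]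
  have hcn : c (m + 1) = 0 := by
    simp only [hc, pref_ge σ (le_refl (m + 1))]
    rw [hy2]
    ring
  rw [hc0, hcn, mul_zero, mul_zero] at habel
  have hterm : ∀ k ∈ Finset.range (m + 1), 0 ≤ (a k - a (k + 1)) * c (k + 1) := by
    intro k _
    apply mul_nonneg
    · have hmono : (⟨min k m, by omega⟩ : Fin (m + 1)) ≤ ⟨min (k + 1) m, by omega⟩ := by
        simp only [Fin.mk_le_mk]
        exact min_le_min (Nat.le_succ k) le_rfl
      have := hs _ _ hmono
      simp only [ha]
      linarith
    · have := hy1 (pref σ (k + 1))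
      simp only [hc]
      linarith
  have := Finset.sum_nonneg hterm
  linarith [hdiff, habel]

end Comb

/-- duality for general separable proximal problems,
Eq. (15)–(17) of the appendix:
`min_x [f(x) + Σ_i h_i(x_i)] = max_{y ∈ B(F)} [−Σ_i h_i*(−y_i)]`, both optima
attained, the minimizer `x*` unique, and any maximizer `y*` satisfies
`−y*_i = h_i'(x*_i)` for all `i`. -/
theorem statement19 {n : ℕ} (F : Finset (Fin n) → ℝ) (hF0 : F ∅ = 0) (hF : Submodular F)
    (f : (Fin n → ℝ) → ℝ) (hf : IsLovasz F f)
    (h h' : Fin n → ℝ → ℝ)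
    (hconv : ∀ i, StrictConvexOn ℝ (Set.univ : Set ℝ) (h i))
    (hderiv : ∀ i t, HasDerivAt (h i) (h' i t) t)
    (hsurj : ∀ i, Function.Surjective (h' i)) :
    ∃ xstar : Fin n → ℝ,
      IsLeast (Set.range (fun x : Fin n → ℝ => f x + ∑ i, h i (x i)))
        (f xstar + ∑ i, h i (xstar i)) ∧
      (∀ x : Fin n → ℝ, f x + ∑ i, h i (x i) = f xstar + ∑ i, h i (xstar i) → x = xstar) ∧
      IsGreatest ((fun y : Fin n → ℝ => -∑ i, realConj (h i) (-(y i))) '' basePolytope F)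
        (f xstar + ∑ i, h i (xstar i)) ∧
      ∀ y ∈ basePolytope F,
        -∑ i, realConj (h i) (-(y i)) = f xstar + ∑ i, h i (xstar i) →
        ∀ i, -(y i) = h' i (xstar i) := by
  classical
  have hsm : ∀ i, StrictMono (h' i) := fun i => deriv_strictMono (hconv i) (hderiv i)
  set g : Fin n → ℝ → ℝ :=
    fun i => ⇑(StrictMono.orderIsoOfSurjective (h' i) (hsm i) (hsurj i)).symm with hg
  have hg1 : ∀ i s, h' i (g i s) = s := fun i s =>
    StrictMono.orderIsoOfSurjective_self_symm_apply (h' i) (hsm i) (hsurj i) s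
  have hgcont : ∀ i, Continuous (g i) := fun i =>
    (StrictMono.orderIsoOfSurjective (h' i) (hsm i) (hsurj i)).symm.continuous
  have hcont : ∀ i, Continuous (h i) := fun i =>
    continuous_iff_continuousAt.mpr fun t => (hderiv i t).continuousAt
  have conj_eq : ∀ i s, realConj (h i) s = s * g i s - h i (g i s) :=
    fun i s => realConj_eq (hconv i) (hderiv i) s (g i s) (hg1 i s)
  have FY : ∀ i (s t : ℝ), s * t - h i t ≤ realConj (h i) s :=
    fun i s t => le_realConj (hconv i) (hderiv i) s (g i s) t (hg1 i s)
  set D : (Fin n → ℝ) → ℝ := fun y => -∑ i, realConj (h i) (-(y i)) with hD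
  -- weak duality
  have weak : ∀ y ∈ basePolytope F, ∀ x : Fin n → ℝ, D y ≤ f x + ∑ i, h i (x i) := by
    intro y hy x
    obtain ⟨σ, hσ⟩ := exists_sortsDesc x
    have h1 : ∑ i, x i * y i ≤ f x := by
      rw [hf x σ hσ]; exact ip_le_lovaszVal F hF0 x y hy σ hσ
    have h3 : ∑ i, ((-(y i)) * x i - h i (x i)) ≤ ∑ i, realConj (h i) (-(y i)) :=
      Finset.sum_le_sum fun i _ => FY i (-(y i)) (x i)
    have h4 : ∑ i, ((-(y i)) * x i - h i (x i)) = -∑ i, x i * y i - ∑ i, h i (x i) := by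
      rw [Finset.sum_sub_distrib, ← Finset.sum_neg_distrib]
      congr 1
      exact Finset.sum_congr rfl fun i _ => by ring
    simp only [hD]
    linarith
  -- base polytope is compact and nonempty
  have hclosed : IsClosed (basePolytope F) := by
    have hrw : basePolytope F =
        (⋂ S : Finset (Fin n), {y : Fin n → ℝ | ∑ i ∈ S, y i ≤ F S}) ∩
          {y : Fin n → ℝ | ∑ i, y i = F Finset.univ} := by
      ext y
      simp [basePolytope, Set.mem_iInter]
    rw [hrw]
    refine IsClosed.inter (isClosed_iInter fun S => ?_) ?_
    · exact isClosed_le (continuous_finset_sum _ fun i _ => continuous_apply i) continuous_const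
    · exact isClosed_eq (continuous_finset_sum _ fun i _ => continuous_apply i) continuous_const
  have hsubbox : basePolytope F ⊆ Set.pi Set.univ
      (fun i => Set.Icc (F Finset.univ - ∑ j ∈ Finset.univ.erase i, F {j}) (F {i})) := by
    rintro y ⟨hy1, hy2⟩ i _
    constructor
    · have h5 : ∑ j ∈ Finset.univ.erase i, y j ≤ ∑ j ∈ Finset.univ.erase i, F {j} :=
        Finset.sum_le_sum fun j _ => by simpa using hy1 {j}
      have h6 : ∑ j ∈ Finset.univ.erase i, y j + y i = ∑ j, y j :=
        Finset.sum_erase_add _ _ (Finset.mem_univ i)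
      rw [hy2] at h6
      linarith
    · simpa using hy1 {i}
  have hcpt : IsCompact (basePolytope F) :=
    IsCompact.of_isClosed_subset (isCompact_univ_pi fun i => isCompact_Icc) hclosed hsubbox
  have hne : (basePolytope F).Nonempty := ⟨greedy F (Equiv.refl _), greedy_mem F hF0 hF _⟩
  have hDcont : Continuous D := by
    apply Continuous.neg
    apply continuous_finset_sum
    intro i _
    have hcomp : (fun y : Fin n → ℝ => realConj (h i) (-(y i)))
        = (fun s => s * g i s - h i (g i s)) ∘ (fun y : Fin n → ℝ => -(y i)) := by
      funext y; exact conj_eq i _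
    rw [hcomp]
    exact ((continuous_id.mul (hgcont i)).sub ((hcont i).comp (hgcont i))).comp
      ((continuous_apply i).neg)
  obtain ⟨ystar, hymem, hymax⟩ := hcpt.exists_isMaxOn hne hDcont.continuousOn
  set xstar : Fin n → ℝ := fun i => g i (-(ystar i)) with hxs
  -- convexity of the base polytope
  have hBPconv : ∀ y ∈ basePolytope F, ∀ t : ℝ, 0 ≤ t → t ≤ 1 →
      (fun i => (1 - t) * ystar i + t * y i) ∈ basePolytope F := by
    rintro y ⟨hy1, hy2⟩ t ht0 ht1
    obtain ⟨hz1, hz2⟩ := hymem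
    constructor
    · intro S
      have e1 : ∑ i ∈ S, ((1 - t) * ystar i + t * y i)
          = (1 - t) * ∑ i ∈ S, ystar i + t * ∑ i ∈ S, y i := by
        rw [Finset.sum_add_distrib, Finset.mul_sum, Finset.mul_sum]
      rw [e1]
      have := mul_le_mul_of_nonneg_left (hz1 S) (by linarith : (0:ℝ) ≤ 1 - t)
      have := mul_le_mul_of_nonneg_left (hy1 S) ht0
      nlinarith
    · have e1 : ∑ i, ((1 - t) * ystar i + t * y i)
          = (1 - t) * ∑ i, ystar i + t * ∑ i, y i := by
        rw [Finset.sum_add_distrib, Finset.mul_sum, Finset.mul_sum]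
      rw [e1, hy2, hz2]; ring
  -- first-order optimality of the dual maximizer
  have hfoc : ∀ y ∈ basePolytope F, ∑ i, xstar i * y i ≤ ∑ i, xstar i * ystar i := by
    intro y hy
    set d : Fin n → ℝ := fun i => y i - ystar i with hdd
    have key : ∀ t : ℝ, 0 < t → t ≤ 1 → ∑ i, d i * g i (-(ystar i + t * d i)) ≤ 0 := by
      intro t ht0 ht1
      have hytmem : (fun i => ystar i + t * d i) ∈ basePolytope F := by
        have e : (fun i => ystar i + t * d i) = (fun i => (1 - t) * ystar i + t * y i) := by
          funext i; simp only [hdd]; ring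
        rw [e]; exact hBPconv y hy t ht0.le ht1
      have hsg : ∀ i, realConj (h i) (-(ystar i + t * d i))
          + t * (d i * g i (-(ystar i + t * d i))) ≤ realConj (h i) (-(ystar i)) := by
        intro i
        have h1 := FY i (-(ystar i)) (g i (-(ystar i + t * d i)))
        have h2 := conj_eq i (-(ystar i + t * d i))
        nlinarith [h1, h2]
      have hsum := Finset.sum_le_sum fun i (_ : i ∈ (Finset.univ : Finset (Fin n))) => hsg i
      rw [Finset.sum_add_distrib, ← Finset.mul_sum] at hsum
      have hmax' : D (fun i => ystar i + t * d i) ≤ D ystar := hymax hytmem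
      simp only [hD, neg_le_neg_iff] at hmax'
      by_contra hpos
      push_neg at hpos
      nlinarith
    have hcS : Continuous fun t : ℝ => ∑ i, d i * g i (-(ystar i + t * d i)) := by
      apply continuous_finset_sum
      intro i _
      exact continuous_const.mul ((hgcont i).comp ((continuous_const.add
        (continuous_id.mul continuous_const)).neg))
    have hlim : Filter.Tendsto (fun t : ℝ => ∑ i, d i * g i (-(ystar i + t * d i)))
        (nhdsWithin 0 (Set.Ioi 0)) (nhds (∑ i, d i * g i (-(ystar i)))) := by
      have h0 : ∑ i, d i * g i (-(ystar i)) = ∑ i, d i * g i (-(ystar i + 0 * d i)) := by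
        simp
      rw [h0]
      exact (hcS.tendsto 0).mono_left nhdsWithin_le_nhds
    have hS0 : ∑ i, d i * g i (-(ystar i)) ≤ 0 := by
      refine le_of_tendsto hlim ?_
      filter_upwards [Ioc_mem_nhdsGT (zero_lt_one)] with t ht
      exact key t ht.1 ht.2
    have e3 : ∑ i, d i * g i (-(ystar i)) = ∑ i, xstar i * y i - ∑ i, xstar i * ystar i := by
      rw [← Finset.sum_sub_distrib]
      exact Finset.sum_congr rfl fun i _ => by simp only [hdd, hxs]; ring
    rw [e3] at hS0
    linarith
  -- f(xstar) = ⟨xstar, ystar⟩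
  obtain ⟨σs, hσs⟩ := exists_sortsDesc xstar
  have hfeq : f xstar = ∑ i, xstar i * ystar i := by
    apply le_antisymm
    · rw [hf xstar σs hσs, lovaszVal_eq_ip]
      exact hfoc (greedy F σs) (greedy_mem F hF0 hF σs)
    · rw [hf xstar σs hσs]
      exact ip_le_lovaszVal F hF0 xstar ystar hymem σs hσs
  -- strong duality value
  have hstrong : D ystar = f xstar + ∑ i, h i (xstar i) := by
    have e1 : ∀ i, realConj (h i) (-(ystar i)) = -(ystar i) * xstar i - h i (xstar i) :=
      fun i => conj_eq i (-(ystar i))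
    have e2 : ∑ i, realConj (h i) (-(ystar i))
        = -∑ i, xstar i * ystar i - ∑ i, h i (xstar i) := by
      rw [Finset.sum_congr rfl fun i _ => e1 i, Finset.sum_sub_distrib,
        ← Finset.sum_neg_distrib]
      congr 1
      exact Finset.sum_congr rfl fun i _ => by ring
    simp only [hD]
    rw [e2, hfeq]
    ring
  have hleast : IsLeast (Set.range (fun x : Fin n → ℝ => f x + ∑ i, h i (x i)))
      (f xstar + ∑ i, h i (xstar i)) := by
    constructor
    · exact ⟨xstar, rfl⟩
    · rintro v ⟨x, rfl⟩
      have := weak ystar hymem x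
      rw [hstrong] at this
      exact this
  refine ⟨xstar, hleast, ?_, ?_, ?_⟩
  · -- uniqueness
    intro x hxeq
    by_contra hne
    obtain ⟨i0, hi0⟩ : ∃ i, x i ≠ xstar i := Function.ne_iff.mp hne
    set mx : Fin n → ℝ := fun i => (1/2 : ℝ) * x i + (1/2 : ℝ) * xstar i with hmx
    obtain ⟨σm, hσm⟩ := exists_sortsDesc mx
    have hgm := greedy_mem F hF0 hF σm
    have l1 : ∑ i, x i * greedy F σm i ≤ f x := by
      obtain ⟨σ1, hσ1⟩ := exists_sortsDesc x
      rw [hf x σ1 hσ1]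
      exact ip_le_lovaszVal F hF0 x _ hgm σ1 hσ1
    have l2 : ∑ i, xstar i * greedy F σm i ≤ f xstar := by
      rw [hf xstar σs hσs]
      exact ip_le_lovaszVal F hF0 xstar _ hgm σs hσs
    have hfm : f mx ≤ (f x + f xstar) / 2 := by
      rw [hf mx σm hσm, lovaszVal_eq_ip]
      have e : ∑ i, mx i * greedy F σm i
          = (∑ i, x i * greedy F σm i) / 2 + (∑ i, xstar i * greedy F σm i) / 2 := by
        rw [Finset.sum_div, Finset.sum_div, ← Finset.sum_add_distrib]
        exact Finset.sum_congr rfl fun i _ => by simp only [hmx]; ring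
      rw [e]
      linarith
    have hhm : ∑ i, h i (mx i) < (∑ i, h i (x i)) / 2 + (∑ i, h i (xstar i)) / 2 := by
      have hle : ∀ i ∈ (Finset.univ : Finset (Fin n)),
          h i (mx i) ≤ h i (x i) / 2 + h i (xstar i) / 2 := by
        intro i _
        by_cases hxi : x i = xstar i
        · have hm2 : mx i = xstar i := by simp only [hmx, hxi]; ring
          rw [hm2, hxi]
          linarith
        · have hstr := (hconv i).2 (Set.mem_univ (x i)) (Set.mem_univ (xstar i)) hxi
            (by norm_num : (0:ℝ) < 1/2) (by norm_num : (0:ℝ) < 1/2) (by norm_num)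
          simp only [smul_eq_mul] at hstr
          simp only [hmx]
          linarith
      have hltI : h i0 (mx i0) < h i0 (x i0) / 2 + h i0 (xstar i0) / 2 := by
        have hstr := (hconv i0).2 (Set.mem_univ (x i0)) (Set.mem_univ (xstar i0)) hi0
          (by norm_num : (0:ℝ) < 1/2) (by norm_num : (0:ℝ) < 1/2) (by norm_num)
        simp only [smul_eq_mul] at hstr
        simp only [hmx]
        linarith
      have hlt := Finset.sum_lt_sum hle ⟨i0, Finset.mem_univ i0, hltI⟩
      rw [Finset.sum_add_distrib, ← Finset.sum_div, ← Finset.sum_div] at hlt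
      exact hlt
    have hlow : f xstar + ∑ i, h i (xstar i) ≤ f mx + ∑ i, h i (mx i) :=
      hleast.2 ⟨mx, rfl⟩
    linarith
  · -- IsGreatest
    constructor
    · exact ⟨ystar, hymem, hstrong⟩
    · rintro v ⟨y, hy, rfl⟩
      exact weak y hy xstar
  · -- optimality conditions
    intro y hy heq i
    have h1 : ∑ j, xstar j * y j ≤ f xstar := by
      rw [hf xstar σs hσs]
      exact ip_le_lovaszVal F hF0 xstar y hy σs hσs
    have h2 : ∀ j ∈ (Finset.univ : Finset (Fin n)),
        (-(y j)) * xstar j - h j (xstar j) ≤ realConj (h j) (-(y j)) :=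
      fun j _ => FY j (-(y j)) (xstar j)
    have h3 : ∑ j, realConj (h j) (-(y j)) ≤ ∑ j, ((-(y j)) * xstar j - h j (xstar j)) := by
      have e4 : ∑ j, ((-(y j)) * xstar j - h j (xstar j))
          = -∑ j, xstar j * y j - ∑ j, h j (xstar j) := by
        rw [Finset.sum_sub_distrib, ← Finset.sum_neg_distrib]
        congr 1
        exact Finset.sum_congr rfl fun j _ => by ring
      rw [e4]
      linarith
    have hall := (Finset.sum_eq_sum_iff_of_le h2).mp
      (le_antisymm (Finset.sum_le_sum h2) h3)
    have heqi := hall i (Finset.mem_univ i)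
    have hxi := eq_realConj (hconv i) (hderiv i) (hg1 i (-(y i))) heqi
    rw [hxi, hg1 i]
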